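/- Let x⋆ be a mode of f. Then there exists δ > 0 such that for all sufficiently small ε > 0, every Max Shift sequence with parameter ε started at any point of ball(x⋆, δ) is eventually constant equal to x⋆ (i.e., converges to x⋆ in a finite number of steps). -/

import Mathlib

open Metric Set Filter MeasureTheory Topology
open scoped Topology RealInnerProductSpace

abbrev Euc (d : ℕ) := EuclideanSpace ℝ (Fin d)

/-- The Hessian of `f`, as the derivative of the gradient field. -/
noncomputable def hess {d : ℕ} (f : Euc d → ℝ) (x : Euc d) : Euc d →L[ℝ] Euc d :=
  fderiv ℝ (gradient f) x

/-- The standing assumptions on the density `f`: nonnegative, integrable, vanishing at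
infinity, twice differentiable with bounded and uniformly continuous zeroth, first and
second derivatives, and Morse (nonsingular Hessian at every critical point). -/
def IsNiceDensity {d : ℕ} (f : Euc d → ℝ) : Prop :=
  (∀ x, 0 ≤ f x) ∧
  Integrable f volume ∧
  Tendsto f (cocompact (Euc d)) (𝓝 0) ∧
  Differentiable ℝ f ∧
  Differentiable ℝ (gradient f) ∧
  (∃ M, ∀ x, |f x| ≤ M) ∧
  (∃ M, ∀ x, ‖gradient f x‖ ≤ M) ∧
  (∃ M, ∀ x, ‖hess f x‖ ≤ M) ∧
  UniformContinuous f ∧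
  UniformContinuous (gradient f) ∧
  UniformContinuous (hess f) ∧
  (∀ x, gradient f x = 0 → Function.Bijective (hess f x))

/-- `γ` is the gradient ascent curve of `f` starting at `x`, defined on `[0, ∞)`. -/
def IsGradFlow {d : ℕ} (f : Euc d → ℝ) (x : Euc d) (γ : ℝ → Euc d) : Prop :=
  γ 0 = x ∧ ∀ t ∈ Ici (0:ℝ), HasDerivWithinAt γ (gradient f (γ t)) (Ici 0) t

/-- A Max Shift sequence with parameter `ε` started at `x₀`: each point maximizes `f` over the
closed ball of radius `ε` around the previous point, and the sequence becomes constant as soon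
as the density value stops strictly increasing. -/
def IsMaxShiftSeq {d : ℕ} (f : Euc d → ℝ) (ε : ℝ) (x₀ : Euc d) (x : ℕ → Euc d) : Prop :=
  x 0 = x₀ ∧ ∀ k : ℕ,
    x (k+1) ∈ closedBall (x k) ε ∧
    (∀ y ∈ closedBall (x k) ε, f y ≤ f (x (k+1))) ∧
    (f (x (k+1)) = f (x k) → ∀ m, k + 1 ≤ m → x m = x (k+1))


lemma exists_gt_of_gradient_ne_zero {d : ℕ} {f : Euc d → ℝ} (hdiff : Differentiable ℝ f)
    {z : Euc d} (hg : gradient f z ≠ 0) {ε : ℝ} (hε : 0 < ε) :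
    ∃ w, dist w z < ε ∧ f z < f w := by
  set g := gradient f z with hgdef
  have hc : ∀ t : ℝ, HasDerivAt (fun t : ℝ => z + t • g) g t := by
    intro t
    simpa using ((hasDerivAt_id t).smul_const g).const_add z
  have hgrad : HasGradientAt f g z := (hdiff z).hasGradientAt
  have hfg : HasFDerivAt f ((InnerProductSpace.toDual ℝ (Euc d)) g) z :=
    hgrad.hasFDerivAt
  have hfg' : HasFDerivAt f ((InnerProductSpace.toDual ℝ (Euc d)) g) (z + (0:ℝ) • g) := by
    simpa using hfg
  have hh : HasDerivAt (fun t : ℝ => f (z + t • g)) (⟪g, g⟫) 0 := by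
    have := hfg'.comp_hasDerivAt (0:ℝ) (hc 0)
    simpa [Function.comp_def] using this
  have hgg : (0:ℝ) < ⟪g, g⟫ := by
    rw [real_inner_self_eq_norm_sq]
    exact pow_pos (norm_pos_iff.mpr hg) 2
  have hslope := hasDerivAt_iff_tendsto_slope.mp hh
  have h1 : ∀ᶠ t in 𝓝[>] (0:ℝ), 0 < slope (fun t : ℝ => f (z + t • g)) 0 t :=
    (hslope.mono_left (nhdsWithin_mono _ (fun t ht => ne_of_gt ht))).eventually_const_lt hgg
  have h2 : ∀ᶠ t in 𝓝[>] (0:ℝ), t < ε / (‖g‖ + 1) :=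
    eventually_nhdsWithin_of_eventually_nhds
      (Filter.Tendsto.eventually_lt_const (by positivity) Filter.tendsto_id)
  obtain ⟨t, ⟨hslopet, htlt⟩, htpos'⟩ := ((h1.and h2).and eventually_mem_nhdsWithin).exists
  have htpos : 0 < t := htpos'
  refine ⟨z + t • g, ?_, ?_⟩
  · rw [dist_eq_norm]
    have : ‖z + t • g - z‖ = t * ‖g‖ := by
      rw [add_sub_cancel_left, norm_smul, Real.norm_eq_abs, abs_of_pos htpos]
    rw [this]
    calc t * ‖g‖ < ε / (‖g‖ + 1) * (‖g‖ + 1) := by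
          apply mul_lt_mul' htlt.le (by linarith [norm_nonneg g]) (norm_nonneg g) (by positivity)
      _ = ε := by field_simp
  · have := hslopet
    rw [slope_def_field] at this
    have h3 : 0 < (f (z + t • g) - f (z + (0:ℝ) • g)) / (t - 0) := by
      simpa using this
    have := (div_pos_iff.mp h3)
    rcases this with ⟨h4, _⟩ | ⟨_, h5⟩
    · simpa using sub_pos.mp (by simpa using h4)
    · linarith

lemma isolated_critical {d : ℕ} {f : Euc d → ℝ}
    (h4 : Differentiable ℝ (gradient f)) (hhc : Continuous (hess f))
    {a : Euc d} (hbij : Function.Bijective (hess f a)) :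
    ∀ᶠ y in 𝓝 a, gradient f y = gradient f a → y = a := by
  have hcd : ContDiff ℝ 1 (gradient f) := contDiff_one_iff_fderiv.mpr ⟨h4, hhc⟩
  set e : Euc d ≃L[ℝ] Euc d :=
    (LinearEquiv.ofBijective ((hess f a).toLinearMap) hbij).toContinuousLinearEquiv with he
  have hce : (e : Euc d →L[ℝ] Euc d) = hess f a := by
    ext v
    simp [he]
  have hsd : HasStrictFDerivAt (gradient f) (e : Euc d →L[ℝ] Euc d) a := by
    rw [hce]
    exact (hcd.contDiffAt).hasStrictFDerivAt one_ne_zero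
  filter_upwards [hsd.eventually_left_inverse] with y hy hgy
  have hya : hsd.localInverse (gradient f) _ _ (gradient f a) = a :=
    hsd.localInverse_apply_image
  rw [← hy, hgy, hya]

/-- Near a mode `x⋆`, for `ε` small enough, every Max Shift sequence started
in a small ball around `x⋆` is eventually constant equal to `x⋆`. -/
theorem maxShift_converges_to_mode_locally
    {d : ℕ} (hd : 0 < d) (f : Euc d → ℝ) (hf : IsNiceDensity f)
    (xstar : Euc d) (hmode : IsLocalMax f xstar) :
    ∃ δ > (0:ℝ), ∃ ε₀ > (0:ℝ), ∀ ε, 0 < ε → ε ≤ ε₀ →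
      ∀ x₀ ∈ ball xstar δ, ∀ x : ℕ → Euc d, IsMaxShiftSeq f ε x₀ x →
        ∃ K : ℕ, ∀ m, K ≤ m → x m = xstar := by
  obtain ⟨h0, h1, h2, hdiff, hdiff2, h5, h6, h7, hucf, h9, huch, hmorse⟩ := hf
  have hcont : Continuous f := hucf.continuous
  -- the gradient vanishes at the mode
  have hgrad0 : gradient f xstar = 0 := by
    unfold gradient
    rw [hmode.fderiv_eq_zero]
    simp
  -- isolated critical point
  have hiso : ∀ᶠ y in 𝓝 xstar, gradient f y = 0 → y = xstar := by
    have := isolated_critical hdiff2 huch.continuous (hmorse xstar hgrad0)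
    rw [hgrad0] at this
    exact this
  -- choose r > 0 with: f ≤ f xstar on closedBall xstar r, and critical pts there are xstar
  obtain ⟨r, hr, hrball⟩ := Metric.eventually_nhds_iff_ball.mp (hmode.and hiso)
  set s := r / 2 with hs
  have hspos : 0 < s := by positivity
  have hmax : ∀ y ∈ closedBall xstar s, f y ≤ f xstar := by
    intro y hy
    exact (hrball y (lt_of_le_of_lt (mem_closedBall.mp hy) (by linarith))).1
  have hcrit : ∀ y ∈ closedBall xstar s, gradient f y = 0 → y = xstar := by
    intro y hy
    exact (hrball y (lt_of_le_of_lt (mem_closedBall.mp hy) (by linarith))).2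
  -- if y in closedBall xstar s and f y = f xstar and y ≠ xstar then y is a local max in ball xstar r
  have hstrict : ∀ y ∈ closedBall xstar s, y ≠ xstar → f y < f xstar := by
    intro y hy hne
    rcases lt_or_eq_of_le (hmax y hy) with h | h
    · exact h
    · exfalso
      have hylm : IsLocalMax f y := by
        have hball : ball y s ∈ 𝓝 y := ball_mem_nhds _ hspos
        filter_upwards [hball] with z hz
        have : dist z xstar < r := by
          calc dist z xstar ≤ dist z y + dist y xstar := dist_triangle _ _ _
            _ < s + s := add_lt_add_of_lt_of_le hz (mem_closedBall.mp hy)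
            _ = r := by rw [hs]; ring
        rw [h]
        exact (hrball z this).1
      have : gradient f y = 0 := by
        unfold gradient
        rw [hylm.fderiv_eq_zero]
        simp
      exact hne (hcrit y hy this)
  -- annulus and its max
  set A : Set (Euc d) := closedBall xstar s \ ball xstar (s/2) with hA
  have hAcompact : IsCompact A := (isCompact_closedBall _ _).diff isOpen_ball
  have hAne : A.Nonempty := by
    refine ⟨xstar + (3*s/4) • EuclideanSpace.single ⟨0, hd⟩ (1:ℝ), ?_, ?_⟩
    · rw [mem_closedBall, dist_eq_norm, add_sub_cancel_left, norm_smul,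
        EuclideanSpace.norm_single]
      rw [Real.norm_eq_abs, abs_of_pos (by positivity)]
      simp
      linarith
    · rw [mem_ball, dist_eq_norm, add_sub_cancel_left, norm_smul,
        EuclideanSpace.norm_single]
      rw [Real.norm_eq_abs, abs_of_pos (by positivity)]
      simp
      linarith
  obtain ⟨p₀, hp₀A, hp₀max⟩ := hAcompact.exists_isMaxOn hAne hcont.continuousOn
  set m := f p₀ with hm
  have hmlt : m < f xstar := by
    apply hstrict p₀ hp₀A.1
    intro h
    apply hp₀A.2
    rw [h]
    exact mem_ball_self (by positivity)
  -- choose δ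
  have hopen : IsOpen {y | m < f y} := isOpen_lt continuous_const hcont
  obtain ⟨δ₀, hδ₀, hδball⟩ := Metric.isOpen_iff.mp hopen xstar hmlt
  set δ := min δ₀ (s/4) with hδdef
  have hδpos : 0 < δ := lt_min hδ₀ (by positivity)
  refine ⟨δ, hδpos, s/4, by positivity, ?_⟩
  intro ε hε hεle x₀ hx₀ x hseq
  obtain ⟨hx0, hstep⟩ := hseq
  -- monotonicity
  have hmono1 : ∀ k, f (x k) ≤ f (x (k+1)) := fun k =>
    (hstep k).2.1 (x k) (mem_closedBall_self hε.le)
  have hmono : Monotone (fun k => f (x k)) := monotone_nat_of_le_succ hmono1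
  -- invariant: stay in ball xstar (s/2) with value > m
  have hinv : ∀ k, x k ∈ ball xstar (s/2) ∧ m < f (x k) := by
    intro k
    induction k with
    | zero =>
      rw [hx0]
      constructor
      · exact lt_of_lt_of_le (mem_ball.mp hx₀) (le_trans (min_le_right _ _) (by linarith))
      · exact hδball (lt_of_lt_of_le (mem_ball.mp hx₀) (min_le_left _ _))
    | succ k ih =>
      obtain ⟨ihball, ihval⟩ := ih
      have hfk : m < f (x (k+1)) := lt_of_lt_of_le ihval (hmono1 k)
      have hdk : dist (x (k+1)) xstar ≤ s := by
        calc dist (x (k+1)) xstar ≤ dist (x (k+1)) (x k) + dist (x k) xstar := dist_triangle _ _ _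
          _ ≤ ε + s/2 := add_le_add (mem_closedBall.mp (hstep k).1) (mem_ball.mp ihball).le
          _ ≤ s/4 + s/2 := by linarith
          _ ≤ s := by linarith
      constructor
      · by_contra hcon
        have : x (k+1) ∈ A := ⟨mem_closedBall.mpr hdk, hcon⟩
        exact absurd (hp₀max this) (not_le.mpr hfk)
      · exact hfk
  -- all iterates are in the big closed ball
  have hinball : ∀ k, x k ∈ closedBall xstar s := fun k =>
    (mem_closedBall.mpr (le_trans (mem_ball.mp (hinv k).1).le (by linarith)))
  -- there is some k with dist (x k) xstar ≤ ε
  have hreach : ∃ k, dist (x k) xstar ≤ ε := by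
    by_contra hcon
    push_neg at hcon
    obtain ⟨z, hzmem, φ, hφ, hconv⟩ :=
      (isCompact_closedBall xstar s).tendsto_subseq hinball
    have hzne : ε ≤ dist z xstar := by
      have hdt : Tendsto (fun j => dist (x (φ j)) xstar) atTop (𝓝 (dist z xstar)) :=
        hconv.dist tendsto_const_nhds
      exact le_of_tendsto_of_tendsto' tendsto_const_nhds hdt (fun j => (hcon (φ j)).le)
    have hgz : gradient f z ≠ 0 := by
      intro h
      have := hcrit z hzmem h
      rw [this] at hzne
      simp at hzne
      linarith
    -- f ∘ x converges
    have hbdd : ∀ k, f (x k) ≤ f xstar := fun k => hmax _ (hinball k)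
    obtain hT | ⟨L, hL⟩ := tendsto_of_monotone hmono
    · obtain ⟨k, hk⟩ := (hT.eventually_gt_atTop (f xstar)).exists
      exact absurd (hbdd k) (not_le.mpr hk)
    have hsub : Tendsto (fun j => f (x (φ j))) atTop (𝓝 L) :=
      hL.comp (hφ.tendsto_atTop)
    have hfz : Tendsto (fun j => f (x (φ j))) atTop (𝓝 (f z)) :=
      (hcont.continuousAt.tendsto).comp hconv
    have hLfz : L = f z := tendsto_nhds_unique hsub hfz
    -- better point near z
    obtain ⟨w, hwz, hfw⟩ := exists_gt_of_gradient_ne_zero hdiff hgz hε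
    have hev : ∀ᶠ j in atTop, dist (x (φ j)) z < ε - dist w z := by
      rw [Metric.tendsto_atTop] at hconv
      obtain ⟨N, hN⟩ := hconv (ε - dist w z) (by linarith)
      exact eventually_atTop.mpr ⟨N, fun j hj => hN j hj⟩
    obtain ⟨j, hj⟩ := hev.exists
    have hwball : w ∈ closedBall (x (φ j)) ε := by
      rw [mem_closedBall, dist_comm]
      calc dist (x (φ j)) w ≤ dist (x (φ j)) z + dist z w := dist_triangle _ _ _
        _ ≤ ε := by rw [dist_comm z w]; linarith
    have h1 : f w ≤ f (x (φ j + 1)) := (hstep (φ j)).2.1 w hwball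
    have h2 : f (x (φ j + 1)) ≤ L := hmono.ge_of_tendsto hL _
    rw [hLfz] at h2
    linarith
  obtain ⟨k, hk⟩ := hreach
  -- x (k+1) = xstar
  have hfix : ∀ n, xstar ∈ closedBall (x n) ε → x (n+1) = xstar := by
    intro n hmem
    have hge : f xstar ≤ f (x (n+1)) := (hstep n).2.1 xstar hmem
    by_contra hne
    have : f (x (n+1)) < f xstar :=
      hstrict _ (mem_closedBall.mpr (le_trans (mem_ball.mp (hinv (n+1)).1).le (by linarith))) hne
    linarith
  have hk1 : x (k+1) = xstar := hfix k (by rw [mem_closedBall, dist_comm]; exact hk)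
  have hk2 : x (k+2) = xstar := by
    apply hfix (k+1)
    rw [hk1]
    exact mem_closedBall_self hε.le
  have hfeq : f (x (k+2)) = f (x (k+1)) := by rw [hk1, hk2]
  refine ⟨k+1, fun n hn => ?_⟩
  rcases eq_or_lt_of_le hn with h | h
  · rw [← h]; exact hk1
  · have : k + 2 ≤ n := h
    rw [(hstep (k+1)).2.2 hfeq n this, hk2]
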